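/- Let X, Y, E be random variables on a common probability space (Ω, μ) taking values in nonempty finite types 𝒳, 𝒴, ℰ, and suppose that for all values x, e, y with μ(X=x, E=e) > 0 one has P(Y=y | X=x, E=e) = P(Y=y | X=x). Let f* : 𝒳 → 𝒴 satisfy: for every x with μ(X=x) > 0 and every y ∈ 𝒴, P(Y = f*(x) | X=x) ≥ P(Y = y | X=x). Then for every e with μ(E=e) > 0 and every function h : 𝒳 → 𝒴, P(f*(X) ≠ Y | E=e) ≤ P(h(X) ≠ Y | E=e); consequently f* minimizes the worst-case risk, i.e. the maximum over e of P(·(X) ≠ Y | E=e) at f* is less than or equal to its value at any h. -/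

import Mathlib

open MeasureTheory ProbabilityTheory

/-- Shannon entropy of a finite-valued random variable `X` under measure `μ`. -/
noncomputable def finEntropy {Ω : Type*} [MeasurableSpace Ω] {S : Type*} [Fintype S]
    (μ : Measure Ω) (X : Ω → S) : ℝ :=
  ∑ s : S, Real.negMulLog (μ (X ⁻¹' {s})).toReal

/-- Conditional entropy `H(X | Y) = ∑ y, μ(Y = y) • H(X ; μ(·|Y=y))`. -/
noncomputable def finCondEntropy {Ω : Type*} [MeasurableSpace Ω] {S T : Type*}
    [Fintype S] [Fintype T] (μ : Measure Ω) (X : Ω → S) (Y : Ω → T) : ℝ :=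
  ∑ t : T, (μ (Y ⁻¹' {t})).toReal * finEntropy (μ[|Y ⁻¹' {t}]) X

/-- Mutual information `I(X ; Y) = H(X) + H(Y) - H(⟨X, Y⟩)`. -/
noncomputable def finMutualInfo {Ω : Type*} [MeasurableSpace Ω] {S T : Type*}
    [Fintype S] [Fintype T] (μ : Measure Ω) (X : Ω → S) (Y : Ω → T) : ℝ :=
  finEntropy μ X + finEntropy μ Y - finEntropy μ (fun ω => (X ω, Y ω))

/-- Conditional mutual information `I(X ; Y | Z) = ∑ z, μ(Z = z) • I(X ; Y ; μ(·|Z=z))`. -/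
noncomputable def finCondMutualInfo {Ω : Type*} [MeasurableSpace Ω] {S T U : Type*}
    [Fintype S] [Fintype T] [Fintype U]
    (μ : Measure Ω) (X : Ω → S) (Y : Ω → T) (Z : Ω → U) : ℝ :=
  ∑ u : U, (μ (Z ⁻¹' {u})).toReal * finMutualInfo (μ[|Z ⁻¹' {u}]) X Y


section Aux
variable {Ω : Type*} [MeasurableSpace Ω] (μ : Measure Ω) [IsProbabilityMeasure μ]
    {𝒳 𝒴 : Type*}
    [Fintype 𝒳] [MeasurableSpace 𝒳] [DiscreteMeasurableSpace 𝒳]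
    [Fintype 𝒴] [MeasurableSpace 𝒴] [DiscreteMeasurableSpace 𝒴]

lemma aux_meas_eq (X : Ω → 𝒳) (Y : Ω → 𝒴) (hX : Measurable X) (hY : Measurable Y)
    (h : 𝒳 → 𝒴) : MeasurableSet {ω | h (X ω) = Y ω} := by
  have : {ω | h (X ω) = Y ω} = ⋃ x : 𝒳, (X ⁻¹' {x} ∩ Y ⁻¹' {h x}) := by
    ext ω
    simp only [Set.mem_setOf_eq, Set.mem_iUnion, Set.mem_inter_iff, Set.mem_preimage,
      Set.mem_singleton_iff]
    exact ⟨fun hh => ⟨X ω, rfl, hh.symm⟩, fun ⟨x, hx, hy⟩ => by rw [hx]; exact hy.symm⟩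
  rw [this]
  exact MeasurableSet.iUnion fun x =>
    (hX (MeasurableSet.of_discrete)).inter (hY (MeasurableSet.of_discrete))

lemma aux_decomp (X : Ω → 𝒳) (Y : Ω → 𝒴) (hX : Measurable X) (hY : Measurable Y)
    (h : 𝒳 → 𝒴) (s : Set Ω) (hs : MeasurableSet s) :
    μ (s ∩ {ω | h (X ω) = Y ω}) = ∑ x : 𝒳, μ (X ⁻¹' {x} ∩ s ∩ Y ⁻¹' {h x}) := by
  have hset : s ∩ {ω | h (X ω) = Y ω} = ⋃ x : 𝒳, (X ⁻¹' {x} ∩ s ∩ Y ⁻¹' {h x}) := by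
    ext ω
    simp only [Set.mem_inter_iff, Set.mem_setOf_eq, Set.mem_iUnion, Set.mem_preimage,
      Set.mem_singleton_iff]
    constructor
    · rintro ⟨hω, heq⟩; exact ⟨X ω, ⟨rfl, hω⟩, heq.symm⟩
    · rintro ⟨x, ⟨hx, hω⟩, hy⟩; exact ⟨hω, by rw [hx]; exact hy.symm⟩
  rw [hset, measure_iUnion, tsum_fintype]
  · intro i j hij
    refine Set.disjoint_left.mpr fun ω hi hj => hij ?_
    rw [← hi.1.1, ← hj.1.1]
  · intro x
    exact ((hX MeasurableSet.of_discrete).inter hs).inter (hY MeasurableSet.of_discrete)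

end Aux

/-- Proposition C.1: if P(Y | X, E) = P(Y | X) and fstar is the conditional Bayes
predictor, then fstar minimizes the risk in every environment, and hence the
worst-case risk over environments. -/
theorem stmt_5 {Ω : Type*} [MeasurableSpace Ω] (μ : Measure Ω) [IsProbabilityMeasure μ]
    {𝒳 𝒴 ℰ : Type*}
    [Fintype 𝒳] [Nonempty 𝒳] [MeasurableSpace 𝒳] [DiscreteMeasurableSpace 𝒳]
    [Fintype 𝒴] [Nonempty 𝒴] [MeasurableSpace 𝒴] [DiscreteMeasurableSpace 𝒴]
    [Fintype ℰ] [Nonempty ℰ] [MeasurableSpace ℰ] [DiscreteMeasurableSpace ℰ]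
    (X : Ω → 𝒳) (Y : Ω → 𝒴) (E : Ω → ℰ)
    (hX : Measurable X) (hY : Measurable Y) (hE : Measurable E)
    (hinv : ∀ (x : 𝒳) (e : ℰ) (y : 𝒴), 0 < μ (X ⁻¹' {x} ∩ E ⁻¹' {e}) →
      μ[|X ⁻¹' {x} ∩ E ⁻¹' {e}] (Y ⁻¹' {y}) = μ[|X ⁻¹' {x}] (Y ⁻¹' {y}))
    (fstar : 𝒳 → 𝒴)
    (hbayes : ∀ x : 𝒳, 0 < μ (X ⁻¹' {x}) → ∀ y : 𝒴,
      μ[|X ⁻¹' {x}] (Y ⁻¹' {y}) ≤ μ[|X ⁻¹' {x}] (Y ⁻¹' {fstar x})) :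
    (∀ e : ℰ, 0 < μ (E ⁻¹' {e}) → ∀ h : 𝒳 → 𝒴,
      μ[|E ⁻¹' {e}] {ω | fstar (X ω) ≠ Y ω} ≤ μ[|E ⁻¹' {e}] {ω | h (X ω) ≠ Y ω}) ∧
    (∀ h : 𝒳 → 𝒴,
      (⨆ e : ℰ, μ[|E ⁻¹' {e}] {ω | fstar (X ω) ≠ Y ω}) ≤
        ⨆ e : ℰ, μ[|E ⁻¹' {e}] {ω | h (X ω) ≠ Y ω}) := by

  have hEmeas : ∀ e : ℰ, MeasurableSet (E ⁻¹' {e}) := fun e => hE MeasurableSet.of_discrete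
  -- core inequality on intersection measures
  have key : ∀ (e : ℰ) (h : 𝒳 → 𝒴),
      μ (E ⁻¹' {e} ∩ {ω | h (X ω) = Y ω}) ≤ μ (E ⁻¹' {e} ∩ {ω | fstar (X ω) = Y ω}) := by
    intro e h
    rw [aux_decomp μ X Y hX hY h (E ⁻¹' {e}) (hEmeas e),
        aux_decomp μ X Y hX hY fstar (E ⁻¹' {e}) (hEmeas e)]
    refine Finset.sum_le_sum fun x _ => ?_
    set t := X ⁻¹' {x} ∩ E ⁻¹' {e} with ht
    have htm : MeasurableSet t := (hX MeasurableSet.of_discrete).inter (hEmeas e)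
    by_cases h0 : μ t = 0
    · exact le_trans (le_trans (measure_mono Set.inter_subset_left) (le_of_eq h0)) zero_le
    · have hpos : 0 < μ t := pos_iff_ne_zero.mpr h0
      have hxpos : 0 < μ (X ⁻¹' {x}) :=
        lt_of_lt_of_le hpos (measure_mono Set.inter_subset_left)
      have hrw : ∀ y : 𝒴, μ (t ∩ Y ⁻¹' {y}) = μ t * μ[|t] (Y ⁻¹' {y}) := by
        intro y
        rw [ProbabilityTheory.cond_apply htm, ← mul_assoc,
          ENNReal.mul_inv_cancel h0 (measure_ne_top μ t), one_mul]
      calc μ (X ⁻¹' {x} ∩ E ⁻¹' {e} ∩ Y ⁻¹' {h x})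
          = μ t * μ[|t] (Y ⁻¹' {h x}) := hrw (h x)
        _ = μ t * μ[|X ⁻¹' {x}] (Y ⁻¹' {h x}) := by rw [hinv x e (h x) hpos]
        _ ≤ μ t * μ[|X ⁻¹' {x}] (Y ⁻¹' {fstar x}) := by
            exact mul_le_mul_right (hbayes x hxpos (h x)) _
        _ = μ t * μ[|t] (Y ⁻¹' {fstar x}) := by rw [hinv x e (fstar x) hpos]
        _ = μ (X ⁻¹' {x} ∩ E ⁻¹' {e} ∩ Y ⁻¹' {fstar x}) := (hrw (fstar x)).symm
  have main : ∀ e : ℰ, 0 < μ (E ⁻¹' {e}) → ∀ h : 𝒳 → 𝒴,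
      μ[|E ⁻¹' {e}] {ω | fstar (X ω) ≠ Y ω} ≤ μ[|E ⁻¹' {e}] {ω | h (X ω) ≠ Y ω} := by
    intro e he h
    have hene : μ (E ⁻¹' {e}) ≠ 0 := he.ne'
    have : IsProbabilityMeasure (μ[|E ⁻¹' {e}]) :=
      ProbabilityTheory.cond_isProbabilityMeasure hene
    have hcompl : ∀ g : 𝒳 → 𝒴,
        μ[|E ⁻¹' {e}] {ω | g (X ω) ≠ Y ω} = 1 - μ[|E ⁻¹' {e}] {ω | g (X ω) = Y ω} := by
      intro g
      have : {ω | g (X ω) ≠ Y ω} = {ω | g (X ω) = Y ω}ᶜ := rfl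
      rw [this, prob_compl_eq_one_sub (aux_meas_eq X Y hX hY g)]
    rw [hcompl fstar, hcompl h]
    refine tsub_le_tsub_left ?_ 1
    rw [ProbabilityTheory.cond_apply (hEmeas e), ProbabilityTheory.cond_apply (hEmeas e)]
    exact mul_le_mul_right (key e h) _
  refine ⟨main, fun h => iSup_mono fun e => ?_⟩
  by_cases he : μ (E ⁻¹' {e}) = 0
  · have hz : μ[|E ⁻¹' {e}] = 0 := by
      simp [ProbabilityTheory.cond, Measure.restrict_eq_zero.mpr he]
    simp [hz]
  · exact main e (pos_iff_ne_zero.mpr he) h
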